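/- There is an absolute constant C such that for every prime r, every m ∈ 𝔽_r, every nonzero i ∈ 𝔽_r, and every integer D ≥ 1, the number a_{D,i} of monic irreducible polynomials g ∈ 𝔽_r[X] of degree D with g(m) = i satisfies |a_{D,i} − (r^D − 1)/(D(r − 1))| ≤ C · r^{D/2}. -/

import Mathlib

open Polynomial

section Aux

variable {p : ℕ} [Fact p.Prime] {F : Type} [Field F] [Algebra (ZMod p) F]

/-- Elements fixed by the `p`-th power map lie in the prime field. -/
lemma aux_fixed {x : F} (hx : x ^ p = x) : x ∈ Set.range (algebraMap (ZMod p) F) := by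
  classical
  have hp1 : 1 < p := (Fact.out : p.Prime).one_lt
  set P : F[X] := X ^ p - X with hP
  have hPne : P ≠ 0 := FiniteField.X_pow_card_sub_X_ne_zero F hp1
  have hsub : Finset.univ.image (algebraMap (ZMod p) F) ⊆ P.roots.toFinset := by
    intro y hy
    obtain ⟨c, -, rfl⟩ := Finset.mem_image.1 hy
    rw [Multiset.mem_toFinset, mem_roots hPne]
    simp [hP, IsRoot.def, ← map_pow, ZMod.pow_card]
  have hcard : P.roots.toFinset.card ≤ p := by
    refine le_trans (Multiset.toFinset_card_le _) ?_
    exact (P.card_roots').trans_eq (FiniteField.X_pow_card_sub_X_natDegree_eq F hp1)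
  have himg : (Finset.univ.image (algebraMap (ZMod p) F)).card = p := by
    rw [Finset.card_image_of_injective _ (algebraMap (ZMod p) F).injective,
      Finset.card_univ, ZMod.card]
  have heq : Finset.univ.image (algebraMap (ZMod p) F) = P.roots.toFinset :=
    Finset.eq_of_subset_of_card_le hsub (by rw [himg]; exact hcard)
  have hxr : x ∈ P.roots.toFinset := by
    rw [Multiset.mem_toFinset, mem_roots hPne]
    simp [hP, IsRoot.def, hx]
  rw [← heq] at hxr
  obtain ⟨c, -, rfl⟩ := Finset.mem_image.1 hxr
  exact ⟨c, rfl⟩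

end Aux

section Aux
variable {p : ℕ} [Fact p.Prime] {F : Type} [Field F] [Algebra (ZMod p) F]


/-- Key identity: if `α` is a root (in a field of cardinality `p ^ D`) of a monic irreducible
`g` of degree `D`, then `g(m) = (m - α) ^ (1 + p + ... + p^(D-1))`. -/
lemma aux_key [Fintype F] {D : ℕ} (hD : D ≠ 0) (hcard : Fintype.card F = p ^ D)
    {g : (ZMod p)[X]} (hmo : g.Monic) (hirr : Irreducible g) (hdeg : g.natDegree = D)
    (m : ZMod p) {α : F} (hroot : aeval α g = 0) :
    algebraMap (ZMod p) F (g.eval m) =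
      (algebraMap (ZMod p) F m - α) ^ (∑ j ∈ Finset.range D, p ^ j) := by
  classical
  set φ := algebraMap (ZMod p) F with hφ
  haveI : CharP F p := charP_of_injective_algebraMap φ.injective p
  have hαD : α ^ p ^ D = α := by
    rw [← hcard]; exact FiniteField.pow_card α
  set h : F[X] := ∏ j ∈ Finset.range D, (X - C (α ^ p ^ j)) with hh
  -- h is fixed by the coefficientwise Frobenius
  have hmap : h.map (frobenius F p) = h := by
    have : h.map (frobenius F p) = ∏ j ∈ Finset.range D, (X - C (α ^ p ^ (j + 1))) := by
      rw [hh, Polynomial.map_prod]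
      refine Finset.prod_congr rfl fun j _ => ?_
      rw [Polynomial.map_sub, map_X, map_C, frobenius_def, ← pow_mul, ← pow_succ]
    rw [this]
    set u : ℕ → F[X] := fun j => X - C (α ^ p ^ j) with hu
    have hu0 : u D = u 0 := by simp only [hu]; rw [hαD, pow_zero, pow_one]
    have h1 : (∏ j ∈ Finset.range D, u (j + 1)) * u 0 = (∏ j ∈ Finset.range D, u j) * u 0 := by
      rw [← Finset.prod_range_succ', Finset.prod_range_succ, hu0]
    have hune : u 0 ≠ 0 := X_sub_C_ne_zero _
    exact mul_right_cancel₀ hune h1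
  -- hence h descends to (ZMod p)[X]
  have hlift : ∀ n : ℕ, h.coeff n ∈ Set.range φ := by
    intro n
    apply aux_fixed
    have := congrArg (fun q : F[X] => q.coeff n) hmap
    simpa [coeff_map, frobenius_def] using this
  obtain ⟨g₀, hg₀⟩ : ∃ q : (ZMod p)[X], q.map φ = h :=
    (Polynomial.mem_lifts _).1 ((Polynomial.lifts_iff_coeff_lifts _).2 hlift)
  have hhmonic : h.Monic := monic_prod_of_monic _ _ fun _ _ => monic_X_sub_C _
  have hg₀monic : g₀.Monic := Polynomial.monic_of_injective φ.injective (by rw [hg₀]; exact hhmonic)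
  have hhdeg : h.natDegree = D := by
    rw [hh, natDegree_prod _ _ fun j _ => X_sub_C_ne_zero _,
      Finset.sum_congr rfl fun j _ => natDegree_X_sub_C _, Finset.sum_const,
      Finset.card_range, smul_eq_mul, mul_one]
  have hg₀deg : g₀.natDegree = D := by
    rw [← natDegree_map_eq_of_injective φ.injective g₀, hg₀, hhdeg]
  have hαroot : aeval α g₀ = 0 := by
    rw [aeval_def, ← eval_map, hg₀, hh, eval_prod]
    refine Finset.prod_eq_zero (Finset.mem_range.2 (Nat.pos_of_ne_zero hD)) ?_
    simp
  -- g is the minimal polynomial of α, so g ∣ g₀; same degree & monic gives g = g₀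
  have hming : minpoly (ZMod p) α = g := (minpoly.eq_of_irreducible_of_monic hirr hroot hmo).symm
  have hdvd : g ∣ g₀ := hming ▸ minpoly.dvd _ _ hαroot
  obtain ⟨c, rfl⟩ := hdvd
  have hcne : c ≠ 0 := right_ne_zero_of_mul hg₀monic.ne_zero
  have hcdeg : c.natDegree = 0 := by
    have := natDegree_mul hmo.ne_zero hcne
    omega
  have hclead : c.leadingCoeff = 1 := by
    have := hg₀monic.leadingCoeff
    rwa [leadingCoeff_mul, hmo.leadingCoeff, one_mul] at this
  have hc1 : c = 1 := by
    rw [eq_C_of_natDegree_eq_zero hcdeg]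
    rw [Polynomial.leadingCoeff, hcdeg] at hclead
    rw [hclead, map_one]
  rw [hc1, mul_one] at hg₀
  -- now evaluate
  have heval : φ (g.eval m) = h.eval (φ m) := by
    rw [← hg₀, eval_map, eval₂_at_apply]
  rw [heval, hh, eval_prod]
  have hm : ∀ j : ℕ, (φ m) ^ p ^ j = φ m := fun j => by
    rw [← map_pow, ZMod.pow_card_pow]
  calc ∏ j ∈ Finset.range D, (X - C (α ^ p ^ j)).eval (φ m)
      = ∏ j ∈ Finset.range D, (φ m - α) ^ p ^ j := by
        refine Finset.prod_congr rfl fun j _ => ?_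
        rw [eval_sub, eval_X, eval_C, sub_pow_char_pow, hm j]
    _ = (φ m - α) ^ ∑ j ∈ Finset.range D, p ^ j := Finset.prod_pow_eq_pow_sum _ _ _
end Aux

section Aux2
variable {p : ℕ} [Fact p.Prime] {F : Type} [Field F] [Algebra (ZMod p) F]

/-- A monic irreducible polynomial of degree `D` over `ZMod p` has a root in a field
of cardinality `p ^ D`, and exactly `D` distinct roots there. -/
lemma aux_roots [Fintype F] [DecidableEq F] {D : ℕ} (hD : D ≠ 0)
    (hcard : Fintype.card F = p ^ D)
    {g : (ZMod p)[X]} (hmo : g.Monic) (hirr : Irreducible g) (hdeg : g.natDegree = D) :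
    (∃ α : F, aeval α g = 0) ∧
      (g.map (algebraMap (ZMod p) F)).roots.toFinset.card = D := by
  haveI := Fact.mk hirr
  have hgne : g ≠ 0 := hmo.ne_zero
  letI : Fintype (AdjoinRoot g) := Module.fintypeOfFintype (AdjoinRoot.powerBasis hgne).basis
  have hcardE : Fintype.card (AdjoinRoot g) = Fintype.card F := by
    rw [hcard, Module.card_eq_pow_finrank (K := ZMod p) (V := AdjoinRoot g), ZMod.card,
      (AdjoinRoot.powerBasis hgne).finrank, AdjoinRoot.powerBasis_dim, hdeg]
  let e : AdjoinRoot g ≃ₐ[ZMod p] F := FiniteField.algEquivOfCardEq p hcardE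
  have hroot : aeval (e (AdjoinRoot.root g)) g = 0 := by
    rw [Polynomial.aeval_algHom_apply]
    simp [AdjoinRoot.aeval_eq, AdjoinRoot.mk_self]
  refine ⟨⟨_, hroot⟩, ?_⟩
  have hming : minpoly (ZMod p) (e (AdjoinRoot.root g)) = g :=
    (minpoly.eq_of_irreducible_of_monic hirr hroot hmo).symm
  have hsplits : Splits (g.map (algebraMap (ZMod p) F)) :=
    hming ▸ Normal.splits inferInstance (e (AdjoinRoot.root g))
  have hsep : (g.map (algebraMap (ZMod p) F)).Separable :=
    (PerfectField.separable_of_irreducible hirr).map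
  rw [Multiset.toFinset_card_of_nodup (nodup_roots hsep)]
  have := (splits_iff_card_roots (f := g.map (algebraMap (ZMod p) F))).1
    hsplits
  rw [this, natDegree_map_eq_of_injective (algebraMap (ZMod p) F).injective, hdeg]

/-- An element whose minimal polynomial has degree `d` is fixed by `x ↦ x ^ p ^ d`. -/
lemma aux_pow_fix [Fintype F] (α : F) :
    α ^ p ^ (minpoly (ZMod p) α).natDegree = α := by
  classical
  haveI : FiniteDimensional (ZMod p) F := Module.Finite.of_finite
  have hint : IsIntegral (ZMod p) α := IsIntegral.of_finite _ _
  letI : Fintype (IntermediateField.adjoin (ZMod p) ({α} : Set F)) := Fintype.ofFinite _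
  have hfr : Module.finrank (ZMod p) (IntermediateField.adjoin (ZMod p) ({α} : Set F)) =
      (minpoly (ZMod p) α).natDegree := by
    have := IntermediateField.adjoin.finrank hint
    exact this
  have hcardK : Fintype.card (IntermediateField.adjoin (ZMod p) ({α} : Set F)) =
      p ^ (minpoly (ZMod p) α).natDegree := by
    rw [Module.card_eq_pow_finrank (K := ZMod p), ZMod.card, hfr]
  have h1 : IntermediateField.AdjoinSimple.gen (ZMod p) α ^
      p ^ (minpoly (ZMod p) α).natDegree = IntermediateField.AdjoinSimple.gen (ZMod p) α := by
    rw [← hcardK]; exact FiniteField.pow_card _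
  have h2 := congrArg (algebraMap (IntermediateField.adjoin (ZMod p) ({α} : Set F)) F) h1
  rwa [map_pow] at h2

end Aux2
open Polynomial

lemma aux_card_pow {F : Type} [Field F] [Fintype F] [DecidableEq F] {k e : ℕ}
    (hk : k ≠ 0) (he : e ≠ 0) (hke : k * e = Fintype.card F - 1) {c : F}
    (hc : c ^ e = 1) (hkF : (k : F) ≠ 0) (hc0 : c ≠ 0) :
    (Finset.univ.filter fun x : F => x ^ k = c).card = k := by
  obtain ⟨g, hg⟩ := IsCyclic.exists_generator (α := Fˣ)
  have hN : orderOf g = Fintype.card F - 1 := by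
    rw [orderOf_eq_card_of_forall_mem_zpowers hg, Nat.card_eq_fintype_card,
      Fintype.card_units]
  -- a primitive k-th root of unity
  have hordζ : orderOf (g ^ e) = k := by
    rw [orderOf_pow, hN, ← hke, Nat.gcd_eq_right ⟨k, mul_comm k e⟩,
      Nat.mul_div_cancel _ (Nat.pos_of_ne_zero he)]
  have hζ : IsPrimitiveRoot ((g ^ e : Fˣ) : F) k :=
    IsPrimitiveRoot.coe_units_iff.2 (hordζ ▸ IsPrimitiveRoot.orderOf (g ^ e))
  -- c is a k-th power
  have hexists : ∃ x : F, x ^ k = c := by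
    obtain ⟨t, ht⟩ := hg hc0.isUnit.unit
    change g ^ t = _ at ht
    have hct : ((g ^ t : Fˣ) : F) = c := by rw [ht]; exact IsUnit.unit_spec hc0.isUnit
    have hcu : (hc0.isUnit.unit : Fˣ) ^ e = 1 := by
      ext
      push_cast
      rw [IsUnit.unit_spec, hc]
    have h1 : g ^ (t * (e : ℤ)) = 1 := by
      rw [zpow_mul, ht, zpow_natCast, hcu]
    have h2 : ((Fintype.card F - 1 : ℕ) : ℤ) ∣ t * (e : ℤ) := by
      rw [← hN]; exact orderOf_dvd_iff_zpow_eq_one.2 h1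
    rw [← hke] at h2
    have h3 : (k : ℤ) ∣ t := by
      rcases h2 with ⟨s, hs⟩
      push_cast at hs
      refine ⟨s, ?_⟩
      have heZ : (e : ℤ) ≠ 0 := by exact_mod_cast he
      have : t * (e : ℤ) = (k : ℤ) * s * e := by rw [hs]; ring
      exact mul_right_cancel₀ heZ this
    obtain ⟨s, hs⟩ := h3
    refine ⟨((g ^ s : Fˣ) : F), ?_⟩
    rw [← Units.val_pow_eq_pow_val, ← zpow_natCast, ← zpow_mul, mul_comm s (k : ℤ), ← hs, ht]
    exact IsUnit.unit_spec hc0.isUnit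
  -- count
  have hcount := hζ.card_nthRoots c
  rw [if_pos hexists] at hcount
  have hsep : (X ^ k - C c : F[X]).Separable := separable_X_pow_sub_C c hkF hc0
  have hfe : (Finset.univ.filter fun x : F => x ^ k = c) = (nthRoots k c).toFinset := by
    ext x
    rw [Finset.mem_filter, Multiset.mem_toFinset, mem_nthRoots (Nat.pos_of_ne_zero hk)]
    simp
  have hnd : (nthRoots k c).Nodup := nodup_roots hsep
  rw [hfe, Multiset.toFinset_card_of_nodup hnd, hcount]
-- geometric sum bound over ℕ
lemma aux_geom_bound {r : ℕ} (hr : 2 ≤ r) (e : ℕ) :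
    ∑ d ∈ Finset.range (e + 1), r ^ d ≤ 2 * r ^ e := by
  induction e with
  | zero => simp
  | succ e ih =>
    rw [Finset.sum_range_succ]
    have h1 : 2 * r ^ e ≤ r ^ (e + 1) := by
      calc 2 * r ^ e = r ^ e * 2 := mul_comm _ _
        _ ≤ r ^ e * r := Nat.mul_le_mul_left _ hr
        _ = r ^ (e + 1) := (pow_succ r e).symm
    have := Nat.add_le_add ih (le_refl (r ^ (e + 1)))
    omega
theorem stmt12 : ∃ C : ℝ, 0 < C ∧
    ∀ r : ℕ, r.Prime → ∀ m i : ZMod r, i ≠ 0 → ∀ D : ℕ, 1 ≤ D →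
      |({g : Polynomial (ZMod r) | g.Monic ∧ Irreducible g ∧ g.natDegree = D ∧
            Polynomial.eval m g = i}.ncard : ℝ) -
          ((r : ℝ) ^ D - 1) / ((D : ℝ) * ((r : ℝ) - 1))|
        ≤ C * (r : ℝ) ^ ((D : ℝ) / 2) := by
  classical
  refine ⟨2, by norm_num, ?_⟩
  intro r hr m i hi D hD
  haveI := Fact.mk hr
  have hD0 : D ≠ 0 := by omega
  have hr2 : 2 ≤ r := hr.two_le
  letI : Fintype (GaloisField r D) := Fintype.ofFinite _
  letI : DecidableEq (GaloisField r D) := Classical.decEq _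
  have hcard : Fintype.card (GaloisField r D) = r ^ D := by
    rw [← Nat.card_eq_fintype_card, GaloisField.card r D hD0]
  set φ := algebraMap (ZMod r) (GaloisField r D) with hφ
  set k : ℕ := ∑ j ∈ Finset.range D, r ^ j with hk
  have hr1 : 1 ≤ r := by omega
  have hrD1 : 1 ≤ r ^ D := Nat.one_le_pow _ _ (by omega)
  have hkpos : 0 < k := by
    rw [hk]
    calc 0 < r ^ 0 := Nat.one_le_pow _ _ (by omega)
    _ ≤ _ := Finset.single_le_sum (f := fun j => r ^ j) (fun _ _ => Nat.zero_le _)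
        (Finset.mem_range.2 (Nat.pos_of_ne_zero hD0))
  have hgeomZ : (k : ℤ) * ((r : ℤ) - 1) = (r : ℤ) ^ D - 1 := by
    rw [hk]; push_cast; exact geom_sum_mul _ _
  have hgeom : k * (r - 1) = r ^ D - 1 := by
    zify [hr1, hrD1]
    exact hgeomZ
  have hint : ∀ α : GaloisField r D, IsIntegral (ZMod r) α := fun α => IsIntegral.of_finite _ _
  set Tfin : Finset (GaloisField r D) := Finset.univ.filter
    (fun α => (minpoly (ZMod r) α).natDegree = D ∧ (minpoly (ZMod r) α).eval m = i) with hT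
  set Afin : Finset (GaloisField r D) := Finset.univ.filter
    (fun α => (φ m - α) ^ k = φ i) with hA
  set Sfin : Finset (Polynomial (ZMod r)) := Tfin.image (fun α => minpoly (ZMod r) α) with hS
  -- Step 1 : the set in the statement is Sfin
  have hSeq : {g : Polynomial (ZMod r) | g.Monic ∧ Irreducible g ∧ g.natDegree = D ∧
      Polynomial.eval m g = i} = ↑Sfin := by
    ext g
    constructor
    · rintro ⟨hmo, hirr, hdeg, hev⟩
      obtain ⟨⟨α, hroot⟩, -⟩ := aux_roots hD0 hcard hmo hirr hdeg
      have hming : minpoly (ZMod r) α = g :=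
        (minpoly.eq_of_irreducible_of_monic hirr hroot hmo).symm
      refine Finset.mem_coe.2 (Finset.mem_image.2 ⟨α, ?_, hming⟩)
      rw [hT, Finset.mem_filter]
      exact ⟨Finset.mem_univ _, by rw [hming]; exact hdeg, by rw [hming]; exact hev⟩
    · intro hg
      obtain ⟨α, hα, rfl⟩ := Finset.mem_image.1 (Finset.mem_coe.1 hg)
      rw [hT, Finset.mem_filter] at hα
      exact ⟨minpoly.monic (hint α), minpoly.irreducible (hint α), hα.2.1, hα.2.2⟩
  -- Step 2 : |Tfin| = |Sfin| * D
  have hfiber : ∀ g ∈ Sfin, (Tfin.filter (fun α => minpoly (ZMod r) α = g)).card = D := by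
    intro g hg
    obtain ⟨β, hβ, rfl⟩ := Finset.mem_image.1 hg
    rw [hT, Finset.mem_filter] at hβ
    obtain ⟨-, hdeg, hev⟩ := hβ
    have hmo : (minpoly (ZMod r) β).Monic := minpoly.monic (hint β)
    have hirr : Irreducible (minpoly (ZMod r) β) := minpoly.irreducible (hint β)
    obtain ⟨-, hcount⟩ := aux_roots hD0 hcard hmo hirr hdeg
    have hset : Tfin.filter (fun α => minpoly (ZMod r) α = minpoly (ZMod r) β) =
        ((minpoly (ZMod r) β).map φ).roots.toFinset := by
      ext γ
      rw [Finset.mem_filter, Multiset.mem_toFinset, mem_roots (hmo.map φ).ne_zero, hT,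
        Finset.mem_filter]
      constructor
      · rintro ⟨⟨-, -, -⟩, hminγ⟩
        rw [IsRoot.def, eval_map, ← aeval_def, ← hminγ]
        exact minpoly.aeval _ _
      · intro hroot
        have haev : Polynomial.aeval γ (minpoly (ZMod r) β) = 0 := by
          rw [aeval_def, ← eval_map]; exact hroot
        have hminγ : minpoly (ZMod r) γ = minpoly (ZMod r) β :=
          (minpoly.eq_of_irreducible_of_monic hirr haev hmo).symm
        refine ⟨⟨Finset.mem_univ _, ?_, ?_⟩, hminγ⟩
        · rw [hminγ]; exact hdeg
        · rw [hminγ]; exact hev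
    rw [hset, hcount]
  have hTcard : Tfin.card = Sfin.card * D := by
    rw [Finset.card_eq_sum_card_fiberwise
      (f := fun α => minpoly (ZMod r) α) (t := Sfin)
      (fun α hα => Finset.mem_image_of_mem _ hα)]
    rw [Finset.sum_congr rfl hfiber, Finset.sum_const, smul_eq_mul]
  -- Step 3 : Tfin ⊆ Afin
  have hTsubA : Tfin ⊆ Afin := by
    intro α hα
    rw [hT, Finset.mem_filter] at hα
    obtain ⟨-, hdeg, hev⟩ := hα
    have hkey := aux_key hD0 hcard (minpoly.monic (hint α)) (minpoly.irreducible (hint α))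
      hdeg m (minpoly.aeval _ _)
    rw [hA, Finset.mem_filter]
    exact ⟨Finset.mem_univ _, by rw [← hkey, hev]⟩
  -- Step 4 : |Afin| = k
  have hi' : φ i ≠ 0 := fun h => hi (φ.injective (by rw [h, map_zero]))
  have hAcard : Afin.card = k := by
    have hbij : Afin.card = (Finset.univ.filter (fun y : GaloisField r D => y ^ k = φ i)).card := by
      refine Finset.card_bij (fun x _ => φ m - x) ?_ ?_ ?_
      · intro x hx
        rw [hA, Finset.mem_filter] at hx
        exact Finset.mem_filter.2 ⟨Finset.mem_univ _, hx.2⟩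
      · intro x hx y hy hxy
        have := sub_right_injective (G := GaloisField r D) hxy
        exact this
      · intro y hy
        rw [Finset.mem_filter] at hy
        refine ⟨φ m - y, ?_, by ring⟩
        rw [hA, Finset.mem_filter]
        exact ⟨Finset.mem_univ _, by rw [sub_sub_cancel]; exact hy.2⟩
    have hkZ : (k : ZMod r) = 1 := by
      rw [hk]
      push_cast
      rw [Finset.sum_congr rfl (fun j _ => by rw [ZMod.natCast_self r])]
      rw [Finset.sum_eq_single_of_mem 0 (Finset.mem_range.2 (Nat.pos_of_ne_zero hD0))
        (fun b _ hb => zero_pow hb)]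
      exact pow_zero 0
    have hkF : ((k : ℕ) : GaloisField r D) ≠ 0 := by
      rw [← map_natCast φ k, hkZ, map_one]
      exact one_ne_zero
    have hce : (φ i) ^ (r - 1) = 1 := by
      rw [← map_pow, ZMod.pow_card_sub_one_eq_one hi, map_one]
    have hke : k * (r - 1) = Fintype.card (GaloisField r D) - 1 := by rw [hcard]; exact hgeom
    rw [hbij]
    exact aux_card_pow (by omega : k ≠ 0) (by omega) hke hce hkF hi'
  -- Step 5 : |Afin \ Tfin| ≤ 2 * r ^ (D / 2)
  have hdegle : ∀ α ∈ Afin \ Tfin, (minpoly (ZMod r) α).natDegree ∈ Finset.range (D / 2 + 1) := by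
    intro α hα
    rw [Finset.mem_sdiff] at hα
    obtain ⟨hαA, hαT⟩ := hα
    rw [hA, Finset.mem_filter] at hαA
    set d := (minpoly (ZMod r) α).natDegree with hd
    have hdvd : d ∣ D := by
      have h1 : Module.finrank (ZMod r)
          (IntermediateField.adjoin (ZMod r) ({α} : Set (GaloisField r D))) = d :=
        IntermediateField.adjoin.finrank (hint α)
      have h2 := Module.finrank_mul_finrank (ZMod r)
        (IntermediateField.adjoin (ZMod r) ({α} : Set (GaloisField r D))) (GaloisField r D)
      rw [h1, GaloisField.finrank r hD0] at h2
      exact ⟨_, h2.symm⟩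
    have hdne : d ≠ D := by
      intro hdD
      apply hαT
      have hkey := aux_key hD0 hcard (minpoly.monic (hint α)) (minpoly.irreducible (hint α))
        hdD m (minpoly.aeval _ _)
      rw [hαA.2] at hkey
      rw [hT, Finset.mem_filter]
      exact ⟨Finset.mem_univ _, hdD, φ.injective hkey⟩
    rw [Finset.mem_range]
    obtain ⟨c, hc⟩ := hdvd
    rcases Nat.lt_or_ge c 2 with hc2 | hc2
    · interval_cases c <;> omega
    · have : d * 2 ≤ d * c := Nat.mul_le_mul_left d hc2
      omega
  have hsdiff : (Afin \ Tfin).card ≤ 2 * r ^ (D / 2) := by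
    have h1 : (Afin \ Tfin).card = ∑ d ∈ Finset.range (D / 2 + 1),
        ((Afin \ Tfin).filter (fun α => (minpoly (ZMod r) α).natDegree = d)).card :=
      Finset.card_eq_sum_card_fiberwise hdegle
    have h2 : ∀ d ∈ Finset.range (D / 2 + 1),
        ((Afin \ Tfin).filter (fun α => (minpoly (ZMod r) α).natDegree = d)).card ≤ r ^ d := by
      intro d _
      rcases Nat.eq_zero_or_pos d with rfl | hdpos
      · have : ((Afin \ Tfin).filter
            (fun α => (minpoly (ZMod r) α).natDegree = 0)) = ∅ := by
          refine Finset.filter_eq_empty_iff.2 fun {α} _ => ?_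
          exact (minpoly.natDegree_pos (hint α)).ne'
        rw [this]
        simp
      · have hrd1 : 1 < r ^ d := Nat.one_lt_pow (by omega : d ≠ 0) (by omega)
        have hne : (X ^ r ^ d - X : Polynomial (GaloisField r D)) ≠ 0 :=
          FiniteField.X_pow_card_sub_X_ne_zero _ hrd1
        have hsub : ((Afin \ Tfin).filter (fun α => (minpoly (ZMod r) α).natDegree = d)) ⊆
            (X ^ r ^ d - X : Polynomial (GaloisField r D)).roots.toFinset := by
          intro α hα
          rw [Finset.mem_filter] at hα
          rw [Multiset.mem_toFinset, mem_roots hne]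
          have := aux_pow_fix (p := r) α
          rw [hα.2] at this
          simp [IsRoot.def, this]
        refine le_trans (Finset.card_le_card hsub) ?_
        refine le_trans (Multiset.toFinset_card_le _) ?_
        exact le_trans (Polynomial.card_roots' _)
          (le_of_eq (FiniteField.X_pow_card_sub_X_natDegree_eq _ hrd1))
    calc (Afin \ Tfin).card ≤ ∑ d ∈ Finset.range (D / 2 + 1), r ^ d := by
          rw [h1]; exact Finset.sum_le_sum h2
      _ ≤ 2 * r ^ (D / 2) := aux_geom_bound hr2 _
  -- Step 6 : numerics
  have hcardLe : Tfin.card ≤ Afin.card := Finset.card_le_card hTsubA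
  have hsd : Afin.card - Tfin.card = (Afin \ Tfin).card := (Finset.card_sdiff_of_subset hTsubA).symm
  have hkey : k - Sfin.card * D ≤ 2 * r ^ (D / 2) := by
    rw [← hTcard, ← hAcard]
    omega
  have haDk : Sfin.card * D ≤ k := by rw [← hTcard, ← hAcard]; exact hcardLe
  rw [hSeq, Set.ncard_coe_finset]
  -- rewrite the main term as k / D
  have hrR : (1 : ℝ) < (r : ℝ) := by exact_mod_cast hr2.trans_lt' one_lt_two
  have hDR : (0 : ℝ) < (D : ℝ) := by exact_mod_cast Nat.pos_of_ne_zero hD0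
  have hkR : (k : ℝ) * ((r : ℝ) - 1) = (r : ℝ) ^ D - 1 := by exact_mod_cast hgeomZ
  have hr1R : (r : ℝ) - 1 ≠ 0 := by linarith
  have hmain : ((r : ℝ) ^ D - 1) / ((D : ℝ) * ((r : ℝ) - 1)) = (k : ℝ) / D := by
    rw [← hkR]
    exact mul_div_mul_right _ _ hr1R
  rw [hmain]
  have hcast : (Sfin.card : ℝ) * (D : ℝ) ≤ (k : ℝ) := by exact_mod_cast haDk
  have h2cast : (k : ℝ) - (Sfin.card : ℝ) * D ≤ 2 * (r : ℝ) ^ (D / 2 : ℕ) := by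
    have h3 : ((k - Sfin.card * D : ℕ) : ℝ) ≤ ((2 * r ^ (D / 2) : ℕ) : ℝ) := by
      exact_mod_cast hkey
    rw [Nat.cast_sub haDk] at h3
    push_cast at h3 ⊢
    linarith
  have hD1R : (1 : ℝ) ≤ (D : ℝ) := by exact_mod_cast hD
  have habs : |(Sfin.card : ℝ) - (k : ℝ) / D| = ((k : ℝ) - (Sfin.card : ℝ) * D) / D := by
    rw [abs_sub_comm, abs_of_nonneg, sub_div]
    · rw [mul_div_assoc, div_self hDR.ne', mul_one]
    · rw [sub_nonneg, le_div_iff₀ hDR]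
      exact hcast
  rw [habs]
  have hstep1 : ((k : ℝ) - (Sfin.card : ℝ) * D) / D ≤ (k : ℝ) - (Sfin.card : ℝ) * D :=
    div_le_self (by linarith) hD1R
  have hstep3 : ((r : ℝ) ^ (D / 2 : ℕ) : ℝ) ≤ (r : ℝ) ^ ((D : ℝ) / 2) := by
    rw [← Real.rpow_natCast (r : ℝ) (D / 2)]
    refine Real.rpow_le_rpow_of_exponent_le (le_of_lt hrR) ?_
    refine le_trans (Nat.cast_div_le) ?_
    norm_num
  linarith
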